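/- Let M be the piecewise linear Orlicz function built from the sequence (b_j) of the counterexample construction (M(0)=0, M'(t)=b_n on (2^{-n-1},2^{-n}), with b_{s_n+k}=c_{n+1}/α_{n+1−k} etc.). Set t_n = 2^{-s_n} where s_n = n(n+1)/2. Then for every m ∈ ℕ, sup_n M(2^m t_n)/M(t_n) < ∞; in fact M(2^m t_n) ≤ (2^{m+1}/α_m)·M(t_n) for all n > m. -/

import Mathlib

open Filter Topology

/-- `α_0 = α_1 = α_2 = 1` and `α_j = (e/j)^j` for `j ≥ 3`. -/
noncomputable def alphaSeq : ℕ → ℝ := fun j => if j ≤ 2 then 1 else (Real.exp 1 / j) ^ j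

/-- `s_n = 1 + 2 + ⋯ + n = n(n+1)/2`. -/
def sTri (n : ℕ) : ℕ := n * (n + 1) / 2

/-- The sequence `(b j)` of the counterexample: `b 0 = c 0`, `b 1 = c 1`, and
`b (s n + k) = c (n+1) / α (n+1-k)` for `n ≥ 1`, `1 ≤ k ≤ n+1` (this determines `b`,
since every integer `≥ 2` is uniquely of this form). -/
def CounterB (c b : ℕ → ℝ) : Prop :=
  b 0 = c 0 ∧ b 1 = c 1 ∧
    ∀ n k : ℕ, 1 ≤ n → 1 ≤ k → k ≤ n + 1 →
      b (sTri n + k) = c (n + 1) / alphaSeq (n + 1 - k)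

/-- `M` is the continuous piecewise linear function with `M 0 = 0` and slope `b n` on
`(2^{-n-1}, 2^{-n})` (slope `b 0` beyond `1/2`). -/
def PiecewiseLinOrlicz (b : ℕ → ℝ) (M : ℝ → ℝ) : Prop :=
  M 0 = 0 ∧ ContinuousOn M (Set.Ici 0) ∧
    (∀ n : ℕ, ∀ t ∈ Set.Ioo ((2 : ℝ) ^ (-(n : ℤ) - 1)) ((2 : ℝ) ^ (-(n : ℤ))),
      HasDerivAt M (b n) t) ∧
    (∀ t : ℝ, 1 / 2 < t → HasDerivAt M (b 0) t)

set_option linter.unusedSectionVars false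

lemma alpha_pos (j : ℕ) : 0 < alphaSeq j := by
  unfold alphaSeq
  split
  · norm_num
  · rename_i h
    have hj : (0:ℝ) < j := by exact_mod_cast (by omega : 0 < j)
    positivity

lemma alpha_le_one (j : ℕ) : alphaSeq j ≤ 1 := by
  unfold alphaSeq
  split
  · exact le_refl 1
  · rename_i h
    have hj : (3:ℝ) ≤ j := by exact_mod_cast (by omega : 3 ≤ j)
    have he : Real.exp 1 ≤ 3 := by
      have := Real.exp_one_lt_d9; linarith
    apply pow_le_one₀
    · positivity
    · rw [div_le_one (by linarith)]; linarith

lemma alpha_succ_le (j : ℕ) : alphaSeq (j+1) ≤ alphaSeq j := by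
  rcases le_or_gt (j+1) 2 with h | h
  · unfold alphaSeq; rw [if_pos h, if_pos (by omega)]
  · rcases le_or_gt j 2 with h2 | h2
    · calc alphaSeq (j+1) ≤ 1 := alpha_le_one _
        _ = alphaSeq j := by unfold alphaSeq; rw [if_pos h2]
    · have hj : (3:ℝ) ≤ j := by exact_mod_cast (by omega : 3 ≤ j)
      have he : Real.exp 1 ≤ 3 := by have := Real.exp_one_lt_d9; linarith
      unfold alphaSeq
      rw [if_neg (by omega), if_neg (by omega)]
      have h0 : (0:ℝ) ≤ Real.exp 1 / (j+1:ℕ) := by positivity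
      have h1 : Real.exp 1 / ((j+1:ℕ):ℝ) ≤ 1 := by
        rw [div_le_one (by push_cast; linarith)]; push_cast; linarith
      calc (Real.exp 1 / ((j+1:ℕ):ℝ)) ^ (j+1) ≤ (Real.exp 1 / ((j+1:ℕ):ℝ)) ^ j :=
            pow_le_pow_of_le_one h0 h1 (by omega)
        _ ≤ (Real.exp 1 / (j:ℝ)) ^ j := by
            apply pow_le_pow_left₀ h0
            apply div_le_div_of_nonneg_left (Real.exp_pos 1).le (by linarith)
            push_cast; linarith

lemma alpha_anti : Antitone alphaSeq := antitone_nat_of_succ_le alpha_succ_le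

lemma sTri_succ (n : ℕ) : sTri (n + 1) = sTri n + (n + 1) := by
  have h : (n + 1) * (n + 1 + 1) = n * (n + 1) + 2 * (n + 1) := by ring
  obtain ⟨t, ht⟩ : 2 ∣ n * (n+1) := (Nat.even_mul_succ_self n).two_dvd
  simp only [sTri, h, ht]
  omega

lemma sTri_ge (n : ℕ) : n ≤ sTri n := by
  induction n with
  | zero => simp [sTri]
  | succ n ih => rw [sTri_succ]; omega

lemma decomp (j : ℕ) (hj : 2 ≤ j) :
    ∃ n k, 1 ≤ n ∧ 1 ≤ k ∧ k ≤ n + 1 ∧ j = sTri n + k := by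
  induction j with
  | zero => omega
  | succ j ih =>
    rcases Nat.lt_or_ge j 2 with h | h
    · have : j = 1 := by omega
      subst this
      exact ⟨1, 1, le_refl _, le_refl _, by omega, by norm_num [sTri]⟩
    · obtain ⟨n, k, hn, hk1, hk2, rfl⟩ := ih h
      rcases eq_or_lt_of_le hk2 with he | hlt
      · refine ⟨n+1, 1, by omega, le_refl _, by omega, ?_⟩
        rw [sTri_succ]; omega
      · exact ⟨n, k+1, hn, by omega, by omega, by omega⟩


section Baux
variable {c b : ℕ → ℝ} (hcpos : ∀ j, 0 < c j) (hb : CounterB c b)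

include hcpos hb

lemma b_pos (j : ℕ) : 0 < b j := by
  rcases Nat.lt_or_ge j 2 with h | h
  · interval_cases j
    · rw [hb.1]; exact hcpos 0
    · rw [hb.2.1]; exact hcpos 1
  · obtain ⟨n, k, hn, hk1, hk2, rfl⟩ := decomp j h
    rw [hb.2.2 n k hn hk1 hk2]
    exact div_pos (hcpos _) (alpha_pos _)

lemma b_sTri (n : ℕ) (hn : 1 ≤ n) : b (sTri n) = c n := by
  rcases eq_or_lt_of_le hn with he | hlt
  · rw [← he]; simpa [sTri] using hb.2.1
  · obtain ⟨n, rfl⟩ : ∃ m, n = m + 1 := ⟨n - 1, by omega⟩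
    have h := hb.2.2 n (n+1) (by omega) (by omega) (le_refl _)
    rw [← sTri_succ] at h
    rw [h]
    simp [alphaSeq]

lemma b_sub (n m : ℕ) (hm : 1 ≤ m) (hmn : m < n) :
    b (sTri n - m) = c n / alphaSeq m := by
  obtain ⟨n, rfl⟩ : ∃ p, n = p + 1 := ⟨n - 1, by omega⟩
  have h := hb.2.2 n (n + 1 - m) (by omega) (by omega) (by omega)
  have h1 : sTri n + (n + 1 - m) = sTri (n+1) - m := by rw [sTri_succ]; omega
  have h2 : n + 1 - (n + 1 - m) = m := by omega
  rw [h1, h2] at h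
  exact h

end Baux

section Banti
variable {c b : ℕ → ℝ} (hcpos : ∀ j, 0 < c j)
  (hcrec : ∀ j : ℕ, c (j + 1) ≤ alphaSeq j * alphaSeq (2 * j ^ 2) * c j)
  (hb : CounterB c b)

include hcpos hcrec hb

lemma b_succ_le (j : ℕ) (hj : 2 ≤ j) : b (j + 1) ≤ b j := by
  obtain ⟨n, k, hn, hk1, hk2, rfl⟩ := decomp j hj
  rcases eq_or_lt_of_le hk2 with he | hlt
  · -- k = n + 1 : block boundary
    subst he
    have hj1 : sTri n + (n + 1) = sTri (n + 1) := (sTri_succ n).symm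
    have hbj : b (sTri n + (n+1)) = c (n+1) := by
      rw [hj1]; exact b_sTri hcpos hb (n+1) (by omega)
    have hbj1 : b (sTri n + (n+1) + 1) = c (n+2) / alphaSeq (n+1) := by
      rw [hj1]
      have h := hb.2.2 (n+1) 1 (by omega) (le_refl _) (by omega)
      simpa using h
    rw [hbj, hbj1]
    rw [div_le_iff₀ (alpha_pos _)]
    calc c (n+2) ≤ alphaSeq (n+1) * alphaSeq (2*(n+1)^2) * c (n+1) := hcrec (n+1)
      _ ≤ alphaSeq (n+1) * 1 * c (n+1) := by
          apply mul_le_mul_of_nonneg_right _ (hcpos _).le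
          exact mul_le_mul_of_nonneg_left (alpha_le_one _) (alpha_pos _).le
      _ = c (n+1) * alphaSeq (n+1) := by ring
  · -- k ≤ n : within block
    have hbj : b (sTri n + k) = c (n+1) / alphaSeq (n+1-k) := hb.2.2 n k hn hk1 hk2
    have hbj1 : b (sTri n + k + 1) = c (n+1) / alphaSeq (n+1-(k+1)) := by
      have h := hb.2.2 n (k+1) hn (by omega) (by omega)
      rw [← add_assoc] at h
      exact h
    rw [hbj, hbj1]
    apply div_le_div_of_nonneg_left (hcpos _).le (alpha_pos _)
    exact alpha_anti (by omega : n + 1 - (k+1) ≤ n + 1 - k)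

lemma b_anti (i j : ℕ) (hj : 2 ≤ j) (hij : j ≤ i) : b i ≤ b j := by
  induction i with
  | zero => omega
  | succ i ih =>
    rcases eq_or_lt_of_le hij with he | hlt
    · rw [he]
    · exact le_trans (b_succ_le hcpos hcrec hb i (by omega)) (ih (by omega))

end Banti

lemma incr_eq {M : ℝ → ℝ} {K x y : ℝ} (hxy : x < y)
    (hc : ContinuousOn M (Set.Icc x y))
    (hd : ∀ t ∈ Set.Ioo x y, HasDerivAt M K t) :
    M y - M x = K * (y - x) := by
  set g : ℝ → ℝ := fun t => M t - K * t with hg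
  have hgc : ContinuousOn g (Set.Icc x y) :=
    hc.sub ((continuous_const.mul continuous_id).continuousOn)
  have hgd : ∀ t ∈ Set.Ioo x y, HasDerivAt g 0 t := by
    intro t ht
    have := (hd t ht).sub ((hasDerivAt_id t).const_mul K)
    simp at this; exact this
  have hint : interior (Set.Icc x y) = Set.Ioo x y := interior_Icc
  have hdiff : DifferentiableOn ℝ g (interior (Set.Icc x y)) := by
    rw [hint]; exact fun t ht => (hgd t ht).differentiableAt.differentiableWithinAt
  have hderiv : ∀ t ∈ interior (Set.Icc x y), deriv g t = 0 := by
    rw [hint]; exact fun t ht => (hgd t ht).deriv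
  have h1 : MonotoneOn g (Set.Icc x y) :=
    monotoneOn_of_deriv_nonneg (convex_Icc x y) hgc hdiff (fun t ht => (hderiv t ht).ge)
  have h2 : AntitoneOn g (Set.Icc x y) :=
    antitoneOn_of_deriv_nonpos (convex_Icc x y) hgc hdiff (fun t ht => (hderiv t ht).le)
  have hxm : x ∈ Set.Icc x y := Set.left_mem_Icc.2 hxy.le
  have hym : y ∈ Set.Icc x y := Set.right_mem_Icc.2 hxy.le
  have := le_antisymm (h1 hxm hym hxy.le) (h2 hxm hym hxy.le)
  simp only [g] at this
  linarith

noncomputable def dy (j : ℕ) : ℝ := (2:ℝ)^(-(j:ℤ))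

lemma dy_pos (j : ℕ) : 0 < dy j := by unfold dy; positivity

lemma dy_succ_eq (j : ℕ) : dy (j+1) = (2:ℝ) ^ (-(j:ℤ) - 1) := by
  unfold dy; push_cast; ring_nf

lemma dy_half (j : ℕ) : dy (j+1) = dy j / 2 := by
  rw [dy_succ_eq]; unfold dy
  rw [sub_eq_add_neg, zpow_add₀ (two_ne_zero)]
  norm_num
  ring

lemma dy_succ_lt (j : ℕ) : dy (j+1) < dy j := by
  rw [dy_half]; have := dy_pos j; linarith

lemma dy_one : dy 1 = 1/2 := by norm_num [dy]

lemma dy_tendsto : Tendsto (fun i : ℕ => dy i) atTop (𝓝 0) := by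
  have h : ∀ i : ℕ, dy i = (1/2:ℝ)^i := by
    intro i
    unfold dy
    rw [zpow_neg, zpow_natCast, ← inv_pow, one_div]
  simp_rw [h]
  exact tendsto_pow_atTop_nhds_zero_of_lt_one (by norm_num) (by norm_num)

section Maux
variable {b : ℕ → ℝ} {M : ℝ → ℝ} (hbpos : ∀ j, 0 < b j) (hPWL : PiecewiseLinOrlicz b M)

include hbpos hPWL

omit hbpos in
lemma M_incr (j : ℕ) : M (dy j) - M (dy (j+1)) = b j * (dy j - dy (j+1)) := by
  apply incr_eq (dy_succ_lt j)
  · exact hPWL.2.1.mono (fun t ht => le_trans (dy_pos (j+1)).le ht.1)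
  · intro t ht
    apply hPWL.2.2.1 j
    rwa [← dy_succ_eq]

omit hbpos in
lemma M_dy_tendsto : Tendsto (fun i : ℕ => M (dy i)) atTop (𝓝 0) := by
  have hc : ContinuousWithinAt M (Set.Ici 0) 0 := hPWL.2.1 0 (by simp)
  have h := hc.tendsto.comp
    (tendsto_nhdsWithin_of_tendsto_nhds_of_eventually_within _ dy_tendsto
      (Filter.Eventually.of_forall (fun i => (dy_pos i).le)))
  rw [hPWL.1] at h
  exact h

lemma M_dy_anti : ∀ i j : ℕ, j ≤ i → M (dy i) ≤ M (dy j) := by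
  intro i j hij
  induction i with
  | zero =>
    have : j = 0 := by omega
    simp [this]
  | succ i ih =>
    rcases eq_or_lt_of_le hij with he | hlt
    · rw [he]
    · have h1 := M_incr hPWL i
      have h2 : 0 ≤ b i * (dy i - dy (i+1)) :=
        mul_nonneg (hbpos i).le (by have := dy_succ_lt i; linarith)
      have := ih (by omega)
      linarith

lemma M_dy_nonneg (j : ℕ) : 0 ≤ M (dy j) := by
  apply le_of_tendsto (M_dy_tendsto hPWL)
  filter_upwards [eventually_ge_atTop j] with i hi
  exact M_dy_anti hbpos hPWL i j hi

lemma M_dy_lower (j : ℕ) : b j * (dy j / 2) ≤ M (dy j) := by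
  have h1 := M_incr hPWL j
  have h2 := M_dy_nonneg hbpos hPWL (j+1)
  have h3 := dy_half j
  nlinarith [hbpos j, dy_pos j]

lemma M_dy_upper (j : ℕ) (hmono : ∀ i, j ≤ i → b i ≤ b j) :
    M (dy j) ≤ b j * dy j := by
  have key : ∀ i, j ≤ i → M (dy j) - M (dy (i+1)) ≤ b j * (dy j - dy (i+1)) := by
    intro i hi
    induction i, hi using Nat.le_induction with
    | base => rw [M_incr hPWL j]
    | succ i hi ih =>
      have h1 := M_incr hPWL (i+1)
      have h2 : b (i+1) * (dy (i+1) - dy (i+2)) ≤ b j * (dy (i+1) - dy (i+2)) := by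
        apply mul_le_mul_of_nonneg_right (hmono (i+1) (by omega))
        have := dy_succ_lt (i+1); linarith
      linarith
  have hlim : Tendsto (fun i : ℕ => b j * (dy j - dy (i+1)) + M (dy (i+1)))
      atTop (𝓝 (b j * (dy j - 0) + 0)) := by
    apply Tendsto.add
    · exact tendsto_const_nhds.mul (tendsto_const_nhds.sub
        (dy_tendsto.comp (tendsto_add_atTop_nat 1)))
    · exact (M_dy_tendsto hPWL).comp (tendsto_add_atTop_nat 1)
  have : M (dy j) ≤ b j * (dy j - 0) + 0 := by
    apply ge_of_tendsto hlim
    filter_upwards [eventually_ge_atTop j] with i hi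
    have := key i hi
    linarith
  simpa using this

lemma M_half_nonneg (x : ℝ) (hx : 1/2 ≤ x) : 0 ≤ M x := by
  have h0 : 0 ≤ b 0 := (hbpos 0).le
  have hM12 : 0 ≤ M (1/2) := by
    rw [← dy_one]
    exact M_dy_nonneg hbpos hPWL 1
  rcases eq_or_lt_of_le hx with he | hlt
  · rwa [← he]
  · have h := incr_eq hlt (hPWL.2.1.mono (fun t ht => by
      simp only [Set.mem_Icc] at ht; simp only [Set.mem_Ici]; linarith [ht.1]))
      (fun t ht => hPWL.2.2.2 t ht.1)
    nlinarith

end Maux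

lemma dy_pow_le {m j : ℕ} (h : m ≤ j) : (2:ℝ)^m * dy j = dy (j - m) := by
  unfold dy
  rw [← zpow_natCast (2:ℝ) m, ← zpow_add₀ (two_ne_zero)]
  congr 1
  push_cast [Nat.cast_sub h]
  ring

lemma dy_pow_ge {m j : ℕ} (h : j ≤ m) : (2:ℝ)^m * dy j = (2:ℝ)^(m - j) := by
  unfold dy
  rw [← zpow_natCast (2:ℝ) m, ← zpow_add₀ (two_ne_zero), ← zpow_natCast (2:ℝ) (m - j)]
  congr 1
  push_cast [Nat.cast_sub h]
  ring


/-- For the piecewise linear Orlicz function `M` built from the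
counterexample sequence `(b j)`, with `t_n = 2^{-s_n}`, one has
`M(2^m t_n) ≤ (2^{m+1}/α_m) M(t_n)` for all `n > m`; in particular
`sup_n M(2^m t_n)/M(t_n) < ∞` for every `m`. -/
theorem counterexample_ratio_bounded (c b : ℕ → ℝ) (hcpos : ∀ j, 0 < c j)
    (hcdec : Antitone c)
    (hcrec : ∀ j : ℕ, c (j + 1) ≤ alphaSeq j * alphaSeq (2 * j ^ 2) * c j)
    (hb : CounterB c b) (M : ℝ → ℝ) (hPWL : PiecewiseLinOrlicz b M) :
    ∀ m : ℕ,
      (∀ n : ℕ, m < n →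
        M ((2 : ℝ) ^ m * (2 : ℝ) ^ (-(sTri n : ℤ))) ≤
          (2 : ℝ) ^ (m + 1) / alphaSeq m * M ((2 : ℝ) ^ (-(sTri n : ℤ)))) ∧
      ∃ C : ℝ, ∀ n : ℕ, 1 ≤ n →
        M ((2 : ℝ) ^ m * (2 : ℝ) ^ (-(sTri n : ℤ))) ≤ C * M ((2 : ℝ) ^ (-(sTri n : ℤ))) := by
  have hbpos : ∀ j, 0 < b j := b_pos hcpos hb
  have hdyeq : ∀ n : ℕ, (2 : ℝ) ^ (-(sTri n : ℤ)) = dy (sTri n) := fun n => rfl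
  intro m
  -- Part 1
  have part1 : ∀ n : ℕ, m < n →
      M ((2 : ℝ) ^ m * (2 : ℝ) ^ (-(sTri n : ℤ))) ≤
        (2 : ℝ) ^ (m + 1) / alphaSeq m * M ((2 : ℝ) ^ (-(sTri n : ℤ))) := by
    intro n hmn
    rw [hdyeq]
    rcases Nat.eq_zero_or_pos m with hm0 | hm1
    · subst hm0
      have h1 : alphaSeq 0 = 1 := by norm_num [alphaSeq]
      have h2 := M_dy_nonneg hbpos hPWL (sTri n)
      rw [h1]
      norm_num
      linarith
    · -- m ≥ 1, n ≥ 2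
      have hn2 : 2 ≤ n := by omega
      obtain ⟨n', rfl⟩ : ∃ p, n = p + 1 := ⟨n - 1, by omega⟩
      have hsucc := sTri_succ n'
      have hge := sTri_ge n'
      have hmle : m ≤ sTri (n' + 1) := by omega
      set s := sTri (n' + 1) with hs
      set j := s - m with hj
      have h2j : 2 ≤ j := by omega
      have hbj : b j = c (n' + 1) / alphaSeq m :=
        b_sub hcpos hb (n' + 1) m hm1 hmn
      have hbs : b s = c (n' + 1) := b_sTri hcpos hb (n' + 1) (by omega)
      have hub : M (dy j) ≤ b j * dy j :=
        M_dy_upper hbpos hPWL j (fun i hi => b_anti hcpos hcrec hb i j h2j hi)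
      have hlb : b s * (dy s / 2) ≤ M (dy s) := M_dy_lower hbpos hPWL s
      have hdy : (2:ℝ)^m * dy s = dy j := dy_pow_le hmle
      rw [hdy]
      have hA : 0 < (2:ℝ)^(m+1) / alphaSeq m := by
        apply div_pos (by positivity) (alpha_pos m)
      have key : b j * dy j = (2:ℝ)^(m+1) / alphaSeq m * (b s * (dy s / 2)) := by
        rw [hbj, hbs, ← hdy]
        have hα := (alpha_pos m).ne'
        field_simp
        ring
      calc M (dy j) ≤ b j * dy j := hub
        _ = (2:ℝ)^(m+1) / alphaSeq m * (b s * (dy s / 2)) := key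
        _ ≤ (2:ℝ)^(m+1) / alphaSeq m * M (dy s) := by
            exact mul_le_mul_of_nonneg_left hlb hA.le
  refine ⟨part1, ?_⟩
  -- Part 2
  have hMpos : ∀ n : ℕ, 1 ≤ n → 0 < M (dy (sTri n)) := by
    intro n hn
    have hlb := M_dy_lower hbpos hPWL (sTri n)
    have := mul_pos (hbpos (sTri n)) (by have := dy_pos (sTri n); linarith : (0:ℝ) < dy (sTri n) / 2)
    linarith
  have hMnum : ∀ n : ℕ, 0 ≤ M ((2:ℝ)^m * dy (sTri n)) := by
    intro n
    rcases le_or_gt m (sTri n) with h | h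
    · rw [dy_pow_le h]; exact M_dy_nonneg hbpos hPWL _
    · rw [dy_pow_ge h.le]
      apply M_half_nonneg hbpos hPWL
      calc (1:ℝ)/2 ≤ 1 := by norm_num
        _ ≤ (2:ℝ)^(m - sTri n) := one_le_pow₀ (by norm_num)
  set R : ℕ → ℝ := fun n => M ((2:ℝ)^m * dy (sTri n)) / M (dy (sTri n)) with hR
  set A : ℝ := (2:ℝ)^(m+1) / alphaSeq m with hA
  have hApos : 0 < A := div_pos (by positivity) (alpha_pos m)
  set C : ℝ := A + ∑ n ∈ Finset.Icc 1 m, R n with hC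
  have hRnonneg : ∀ n ∈ Finset.Icc 1 m, 0 ≤ R n := by
    intro n hn
    simp only [Finset.mem_Icc] at hn
    exact div_nonneg (hMnum n) (hMpos n hn.1).le
  have hsum : 0 ≤ ∑ n ∈ Finset.Icc 1 m, R n := Finset.sum_nonneg hRnonneg
  refine ⟨C, ?_⟩
  intro n hn
  simp only [hdyeq]
  rcases le_or_gt n m with hcase | hcase
  · -- small n : use the ratio itself
    have hMn := hMpos n hn
    have heq : M ((2:ℝ)^m * dy (sTri n)) = R n * M (dy (sTri n)) := by
      rw [hR]
      field_simp
    rw [heq]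
    apply mul_le_mul_of_nonneg_right _ hMn.le
    calc R n ≤ ∑ k ∈ Finset.Icc 1 m, R k :=
          Finset.single_le_sum hRnonneg (Finset.mem_Icc.2 ⟨hn, hcase⟩)
      _ ≤ C := by rw [hC]; linarith
  · -- large n : use part 1
    have h := part1 n hcase
    simp only [hdyeq] at h
    calc M ((2:ℝ)^m * dy (sTri n)) ≤ A * M (dy (sTri n)) := h
      _ ≤ C * M (dy (sTri n)) := by
          apply mul_le_mul_of_nonneg_right _ (hMpos n hn).le
          rw [hC]; linarith
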